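/- Let σ and τ be integers with 0 ≤ τ < σ. For every ε > 0 there exists a constant c(ε) > 0, independent of N and of the grid function, such that for every integer N ≥ 1 and every periodic grid function z one has ‖D₊^τ z‖_h² ≤ ε ‖D₊^σ z‖_h² + c(ε) ‖z‖_h². -/

import Mathlib

/-- Forward difference operator `(D₊u)_i = (u_{i+1} − u_i)/h`. -/
noncomputable def Dp (h : ℝ) (u : ℤ → ℝ) : ℤ → ℝ := fun i => (u (i + 1) - u i) / h

/-- Backward difference operator `(D₋u)_i = (u_i − u_{i−1})/h`. -/
noncomputable def Dm (h : ℝ) (u : ℤ → ℝ) : ℤ → ℝ := fun i => (u i - u (i - 1)) / h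

/-- Central difference operator `(D₀u)_i = (u_{i+1} − u_{i−1})/(2h)`. -/
noncomputable def D0 (h : ℝ) (u : ℤ → ℝ) : ℤ → ℝ := fun i => (u (i + 1) - u (i - 1)) / (2 * h)

/-- Discrete inner product `(f,g)_h = h Σ_{i=1}^N f_i g_i`. -/
noncomputable def iph (N : ℕ) (h : ℝ) (f g : ℤ → ℝ) : ℝ :=
  h * ∑ i ∈ Finset.Icc (1 : ℤ) (N : ℤ), f i * g i

/-- Discrete squared norm `‖f‖_h² = h Σ_{i=1}^N f_i²`. -/
noncomputable def nh2 (N : ℕ) (h : ℝ) (f : ℤ → ℝ) : ℝ :=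
  h * ∑ i ∈ Finset.Icc (1 : ℤ) (N : ℤ), (f i) ^ 2

/-- Discrete norm `‖f‖_h`. -/
noncomputable def normh (N : ℕ) (h : ℝ) (f : ℤ → ℝ) : ℝ := Real.sqrt (nh2 N h f)

/-- A periodic grid function with period `N`: `u_{i+N} = u_i` for all `i`. -/
def PeriodicGrid (N : ℕ) (u : ℤ → ℝ) : Prop := ∀ i : ℤ, u (i + N) = u i

lemma dp_periodic {N : ℕ} {h : ℝ} {u : ℤ → ℝ} (hu : PeriodicGrid N u) :
    PeriodicGrid N (Dp h u) := by
  intro i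
  simp only [Dp]
  rw [show i + (N:ℤ) + 1 = (i+1) + N by ring, hu, hu]

lemma dp_iter_periodic {N : ℕ} {h : ℝ} {u : ℤ → ℝ} (hu : PeriodicGrid N u) (k : ℕ) :
    PeriodicGrid N ((Dp h)^[k] u) := by
  induction k with
  | zero => exact hu
  | succ k ih => rw [Function.iterate_succ_apply']; exact dp_periodic ih

lemma nh2_nonneg {N : ℕ} {h : ℝ} (hh : 0 ≤ h) (f : ℤ → ℝ) : 0 ≤ nh2 N h f :=
  mul_nonneg hh (Finset.sum_nonneg fun i _ => sq_nonneg _)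

lemma shift_sum {N : ℕ} (hN : 1 ≤ N) {f : ℤ → ℝ} (hf : PeriodicGrid N f) :
    ∑ i ∈ Finset.Icc (1:ℤ) (N:ℤ), f (i+1) = ∑ i ∈ Finset.Icc (1:ℤ) (N:ℤ), f i := by
  have hN' : (1:ℤ) ≤ (N:ℤ) := by exact_mod_cast hN
  have h1 : ∑ i ∈ Finset.Icc (1:ℤ) (N:ℤ), f (i+1) = ∑ i ∈ Finset.Icc (2:ℤ) ((N:ℤ)+1), f i := by
    apply Finset.sum_nbij' (fun i => i + 1) (fun i => i - 1) <;>
      intros <;> simp_all [Finset.mem_Icc] <;> omega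
  have h2 : Finset.Icc (2:ℤ) ((N:ℤ)+1) = insert ((N:ℤ)+1) (Finset.Icc 2 (N:ℤ)) := by
    ext x; simp [Finset.mem_Icc]; omega
  have h3 : Finset.Icc (1:ℤ) (N:ℤ) = insert (1:ℤ) (Finset.Icc 2 (N:ℤ)) := by
    ext x; simp [Finset.mem_Icc]; omega
  have h4 : ((N:ℤ)+1) ∉ Finset.Icc (2:ℤ) (N:ℤ) := by simp [Finset.mem_Icc]
  have h5 : (1:ℤ) ∉ Finset.Icc (2:ℤ) (N:ℤ) := by simp
  have h6 : f ((N:ℤ)+1) = f 1 := by rw [show (N:ℤ)+1 = 1 + (N:ℤ) by ring, hf 1]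
  rw [h1, h2, h3, Finset.sum_insert h4, Finset.sum_insert h5, h6]

/-- Key step: summation by parts + Cauchy-Schwarz. -/
lemma step {N : ℕ} (hN : 1 ≤ N) {h : ℝ} (hh : 0 < h) {u : ℤ → ℝ} (hu : PeriodicGrid N u)
    {δ : ℝ} (hδ : 0 < δ) :
    nh2 N h (Dp h u) ≤ δ * nh2 N h (Dp h (Dp h u)) + (1/(4*δ)) * nh2 N h u := by
  set v : ℤ → ℝ := Dp h u with hv
  have hvper : PeriodicGrid N v := dp_periodic hu
  set I := Finset.Icc (1:ℤ) (N:ℤ)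
  set S : ℝ := ∑ i ∈ I, (v i)^2 with hS
  set A : ℝ := ∑ i ∈ I, (u i)^2 with hA
  set B : ℝ := ∑ i ∈ I, (Dp h v i)^2 with hB
  -- w i = D₋ v i = Dp v (i-1)
  set w : ℤ → ℝ := fun i => Dp h v (i - 1) with hw
  -- summation by parts: S = -∑ u i * w i
  have shift1 : ∑ i ∈ I, v i * u (i+1) = ∑ i ∈ I, v (i-1) * u i := by
    have hg : PeriodicGrid N (fun i => v (i-1) * u i) := by
      intro i
      have h1 : v (i + (N:ℤ) - 1) = v (i-1) := by
        rw [show i + (N:ℤ) - 1 = (i-1) + N by ring, hvper]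
      simp only [h1, hu i]
    have := shift_sum hN hg
    simp only [add_sub_cancel_right] at this
    exact this
  have hT : h * S = ∑ i ∈ I, (v i * u (i+1) - v i * u i) := by
    rw [hS, Finset.mul_sum]
    refine Finset.sum_congr rfl fun i _ => ?_
    have hv' : v i = (u (i+1) - u i)/h := rfl
    rw [hv']; field_simp
  have hT2 : h * (∑ i ∈ I, u i * w i) = ∑ i ∈ I, (u i * v i - u i * v (i-1)) := by
    rw [Finset.mul_sum]
    refine Finset.sum_congr rfl fun i _ => ?_
    have hw' : w i = (v i - v (i-1))/h := by
      simp only [hw, Dp]; rw [show i - 1 + 1 = i by ring]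
    rw [hw']; field_simp
  have parts : S = -∑ i ∈ I, u i * w i := by
    have hz : h * S + h * (∑ i ∈ I, u i * w i) = 0 := by
      rw [hT, hT2, ← Finset.sum_add_distrib]
      have hpt : ∀ i ∈ I, (v i * u (i+1) - v i * u i) + (u i * v i - u i * v (i-1))
          = v i * u (i+1) - v (i-1) * u i := fun i _ => by ring
      rw [Finset.sum_congr rfl hpt, Finset.sum_sub_distrib, shift1, sub_self]
    have hsum : h * (S + ∑ i ∈ I, u i * w i) = 0 := by ring_nf; ring_nf at hz; linarith
    have := (mul_eq_zero.mp hsum).resolve_left hh.ne'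
    linarith
  -- ∑ w² = B
  have wsq : ∑ i ∈ I, (w i)^2 = B := by
    have hg : PeriodicGrid N (fun i => (Dp h v (i-1))^2) := by
      intro i
      have h1 : Dp h v (i + (N:ℤ) - 1) = Dp h v (i-1) := by
        rw [show i + (N:ℤ) - 1 = (i-1) + N by ring, dp_periodic hvper]
      simp [h1]
    have := shift_sum hN hg
    simp only [add_sub_cancel_right] at this
    exact this.symm
  -- Cauchy-Schwarz
  have cs : S^2 ≤ A * B := by
    have h2 := Finset.sum_mul_sq_le_sq_mul_sq I u w
    rw [wsq] at h2
    calc S^2 = (∑ i ∈ I, u i * w i)^2 := by rw [parts]; ring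
      _ ≤ A * B := h2
  have hS0 : 0 ≤ S := Finset.sum_nonneg fun i _ => sq_nonneg _
  have hA0 : 0 ≤ A := Finset.sum_nonneg fun i _ => sq_nonneg _
  have hB0 : 0 ≤ B := Finset.sum_nonneg fun i _ => sq_nonneg _
  have e1 : nh2 N h v = h * S := rfl
  have e2 : nh2 N h (Dp h v) = h * B := rfl
  have e3 : nh2 N h u = h * A := rfl
  rw [e1, e2, e3]
  clear hT hT2 parts wsq shift1 hS hA hB
  clear_value S A B
  have F : (4*δ)^2 * S^2 ≤ (A + 4*δ^2*B)^2 := by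
    have h16 : 16*δ^2 * S^2 ≤ 16*δ^2 * (A*B) :=
      mul_le_mul_of_nonneg_left cs (by positivity)
    nlinarith [sq_nonneg (A - 4*δ^2*B)]
  have hY1 : (0:ℝ) ≤ A + 4*δ^2*B := by positivity
  have hY2 : (0:ℝ) ≤ 4*δ*S := by positivity
  have key4 : 4*δ*S ≤ A + 4*δ^2*B := by nlinarith [F, hY1, hY2]
  have key : S ≤ δ * B + (1/(4*δ)) * A := by
    have hdiff : δ*B + 1/(4*δ)*A - S = (A + 4*δ^2*B - 4*δ*S)/(4*δ) := by
      field_simp; ring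
    have hnn : (0:ℝ) ≤ (A + 4*δ^2*B - 4*δ*S)/(4*δ) :=
      div_nonneg (by linarith) (by positivity)
    linarith [hdiff ▸ hnn]
  have hmul := mul_le_mul_of_nonneg_left key hh.le
  have hexp : h*(δ*B + 1/(4*δ)*A) = δ*(h*B) + 1/(4*δ)*(h*A) := by ring
  linarith [hmul, hexp.le, hexp.ge]

/-- One-step interpolation for iterates. -/
lemma Aj (j : ℕ) : ∀ ε : ℝ, 0 < ε → ∃ c > 0, ∀ N : ℕ, 1 ≤ N → ∀ z : ℤ → ℝ, PeriodicGrid N z →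
    nh2 N (1/N) ((Dp (1/N))^[j] z)
      ≤ ε * nh2 N (1/N) ((Dp (1/N))^[j+1] z) + c * nh2 N (1/N) z := by
  induction j with
  | zero =>
    intro ε hε
    refine ⟨1, one_pos, fun N hN z hz => ?_⟩
    have h1 : (0:ℝ) ≤ 1/(N:ℝ) := by positivity
    have := nh2_nonneg (N := N) h1 ((Dp (1/(N:ℝ)))^[1] z)
    simp only [Function.iterate_zero_apply]
    nlinarith
  | succ j ih =>
    intro ε hε
    obtain ⟨c', hc', H⟩ := ih ε hε  -- with ε' := ε (we'll use ε' = 2δ, δ = ε/2 so ε' = ε)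
    refine ⟨c'/ε, by positivity, fun N hN z hz => ?_⟩
    have hh : (0:ℝ) < 1/(N:ℝ) := by
      have : (0:ℝ) < (N:ℝ) := by exact_mod_cast hN
      positivity
    have hδ : (0:ℝ) < ε/2 := by positivity
    have hper := dp_iter_periodic (h := 1/(N:ℝ)) hz j
    have hstep := step hN hh hper hδ
    have hih := H N hN z hz
    -- rewrite iterates
    have e1 : (Dp (1/(N:ℝ)))^[j+1] z = Dp (1/(N:ℝ)) ((Dp (1/(N:ℝ)))^[j] z) :=
      Function.iterate_succ_apply' _ _ _
    have e2 : (Dp (1/(N:ℝ)))^[j+2] z = Dp (1/(N:ℝ)) (Dp (1/(N:ℝ)) ((Dp (1/(N:ℝ)))^[j] z)) := by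
      rw [Function.iterate_succ_apply', Function.iterate_succ_apply']
    rw [e1] at hih ⊢
    rw [show j+1+1 = j+2 from rfl, e2]
    set X := nh2 N (1/(N:ℝ)) (Dp (1/(N:ℝ)) ((Dp (1/(N:ℝ)))^[j] z))
    set Y := nh2 N (1/(N:ℝ)) (Dp (1/(N:ℝ)) (Dp (1/(N:ℝ)) ((Dp (1/(N:ℝ)))^[j] z)))
    set Z := nh2 N (1/(N:ℝ)) z
    set W := nh2 N (1/(N:ℝ)) ((Dp (1/(N:ℝ)))^[j] z)
    -- hstep : X ≤ ε/2 * Y + 1/(4*(ε/2)) * W;  hih : W ≤ ε * X + c' * Z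
    have h4 : 1/(4*(ε/2)) = 1/(2*ε) := by ring_nf
    rw [h4] at hstep
    have hZ0 : 0 ≤ Z := nh2_nonneg hh.le z
    have : X ≤ ε/2 * Y + 1/(2*ε) * (ε * X + c' * Z) := by
      calc X ≤ ε/2 * Y + 1/(2*ε) * W := hstep
        _ ≤ _ := by
            have : (0:ℝ) < 1/(2*ε) := by positivity
            nlinarith [hih]
    have hx : 1/(2*ε) * (ε * X) = X/2 := by field_simp
    have hc'' : 1/(2*ε) * (c' * Z) = (c'/(2*ε)) * Z := by ring
    have hfin : X/2 ≤ ε/2 * Y + (c'/(2*ε)) * Z := by nlinarith [this]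
    have : c'/ε * Z = 2 * ((c'/(2*ε)) * Z) := by field_simp
    linarith [hfin, this]

/-- Paper's Lemma 2.3: for integers `0 ≤ τ < σ` and every `ε > 0` there is a constant
`c(ε) > 0`, independent of `N` and of the grid function, such that for every `N ≥ 1` and every
periodic grid function `z`, `‖D₊^τ z‖_h² ≤ ε ‖D₊^σ z‖_h² + c(ε) ‖z‖_h²` (with `Δx = 1/N`). -/
theorem discrete_interpolation (σ τ : ℕ) (hτσ : τ < σ) (ε : ℝ) (hε : 0 < ε) :
    ∃ c > 0, ∀ N : ℕ, 1 ≤ N → ∀ z : ℤ → ℝ, PeriodicGrid N z →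
      nh2 N (1 / N) ((Dp (1 / N))^[τ] z)
        ≤ ε * nh2 N (1 / N) ((Dp (1 / N))^[σ] z) + c * nh2 N (1 / N) z := by
  obtain ⟨k, rfl⟩ : ∃ k, σ = τ + 1 + k := ⟨σ - τ - 1, by omega⟩
  clear hτσ
  induction k generalizing ε with
  | zero => exact Aj τ ε hε
  | succ k ih =>
    obtain ⟨c₁, hc₁, H₁⟩ := ih 1 one_pos
    obtain ⟨c₂, hc₂, H₂⟩ := Aj (τ+1+k) ε hε
    refine ⟨c₁ + c₂, by positivity, fun N hN z hz => ?_⟩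
    have h1 := H₁ N hN z hz
    have h2 := H₂ N hN z hz
    have e : τ + 1 + (k+1) = (τ+1+k) + 1 := by omega
    rw [e]
    have hZ0 : 0 ≤ nh2 N (1/(N:ℝ)) z := by
      apply nh2_nonneg _ z
      have : (0:ℝ) < (N:ℝ) := by exact_mod_cast hN
      positivity
    nlinarith [h1, h2]
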